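/- Let s be a subset of B such that Algebra.adjoin C (π '' s) = ⊤, i.e. the images of s generate B ⧸ J as a C-algebra. Then there exists a finite subset T of B contained in the ideal J such that Algebra.adjoin C (s ∪ T) = ⊤. -/

import Mathlib

/-- Let `B` be a commutative `C`-algebra which is finitely generated as a
`C`-module, `I` a finitely generated ideal of `C`, `J = I·B`, and `π : B → B ⧸ J` the quotient
map. If `s ⊆ B` is a subset whose image generates `B ⧸ J` as a `C`-algebra, then there is a
finite subset `T` of `B` contained in `J` such that `s ∪ T` generates `B` as a `C`-algebra. -/
theorem stmt12 (C B : Type*) [CommRing C] [CommRing B] [Algebra C B]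
    [Module.Finite C B] (I : Ideal C) (hI : I.FG) (s : Set B)
    (hs : Algebra.adjoin C
      (Ideal.Quotient.mk (Ideal.map (algebraMap C B) I) '' s) = ⊤) :
    ∃ T : Finset B,
      (T : Set B) ⊆ (Ideal.map (algebraMap C B) I : Set B) ∧
      Algebra.adjoin C (s ∪ (T : Set B)) = ⊤ := by
  classical
  set J := Ideal.map (algebraMap C B) I with hJ
  obtain ⟨f, hf⟩ := hI
  obtain ⟨g, hg⟩ := Module.Finite.fg_top (R := C) (M := B)
  refine ⟨(f ×ˢ g).image (fun p => p.1 • p.2), ?_, ?_⟩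
  · intro x hx
    simp only [Finset.coe_image, Set.mem_image, Finset.mem_coe, Finset.mem_product] at hx
    obtain ⟨⟨a, b⟩, ⟨haf, -⟩, rfl⟩ := hx
    have ha : a ∈ I := hf ▸ Ideal.subset_span haf
    have : algebraMap C B a ∈ J := Ideal.mem_map_of_mem _ ha
    simpa [Algebra.smul_def] using Ideal.mul_mem_right b _ this
  · set T : Finset B := (f ×ˢ g).image (fun p => p.1 • p.2) with hT
    -- J ⊆ span C T ⊆ adjoin C (s ∪ T)
    have hspan : (J.restrictScalars C : Submodule C B) ≤ Submodule.span C (T : Set B) := by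
      rw [← Ideal.smul_top_eq_map, ← hf, ← hg, Submodule.span_smul_span]
      refine Submodule.span_le.2 ?_
      intro x hx
      simp only [Set.mem_smul] at hx
      obtain ⟨a, ha, b, hb, rfl⟩ := hx
      refine Submodule.subset_span ?_
      simp only [hT, Finset.coe_image, Set.mem_image, Finset.mem_coe, Finset.mem_product]
      exact ⟨⟨a, b⟩, ⟨ha, hb⟩, rfl⟩
    have hJA : (J : Set B) ⊆ (Algebra.adjoin C (s ∪ (T : Set B)) : Set B) := by
      intro x hx
      have hx' : x ∈ Submodule.span C (T : Set B) := hspan hx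
      have : Submodule.span C (T : Set B) ≤
          Subalgebra.toSubmodule (Algebra.adjoin C (s ∪ (T : Set B))) :=
        Submodule.span_le.2 (fun y hy => Algebra.subset_adjoin (Or.inr hy))
      exact this hx'
    -- every b decomposes as a + j
    rw [eq_top_iff]
    intro b _
    have hπ : (Ideal.Quotient.mkₐ C J : B →ₐ[C] B ⧸ J) b ∈
        (Algebra.adjoin C s).map (Ideal.Quotient.mkₐ C J) := by
      rw [AlgHom.map_adjoin]
      simp only [Ideal.Quotient.mkₐ_eq_mk]
      rw [hs]; trivial
    obtain ⟨a, ha, hab⟩ := hπ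
    have hmem : b - a ∈ J := by
      rw [← Ideal.Quotient.eq]
      simpa [Ideal.Quotient.mkₐ_eq_mk] using hab.symm
    have ha' : a ∈ Algebra.adjoin C (s ∪ (T : Set B)) :=
      Algebra.adjoin_mono Set.subset_union_left ha
    have := add_mem ha' (hJA hmem)
    simpa using this
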